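/- Let $a, b, c \ge 0$ with $a + b + c = 1$ and $a = c \neq 0$. Define $p_0 = a$ and $p_{d+1} = a + b p_d + c p_d^2$. Then for every natural number $d \ge 1$, $p_d \ge 1 - 1/(a d)$. -/
import Mathlib


/-- At the threshold `a = c`, the forcing probability recurrence
`p 0 = a`, `p (d+1) = a + b * p d + c * (p d)^2` satisfies
`p d ≥ 1 - 1/(a d)` for all `d ≥ 1`. -/
theorem stmt0 (a b c : ℝ) (ha : 0 ≤ a) (hb : 0 ≤ b) (hc : 0 ≤ c)
    (hsum : a + b + c = 1) (hac : a = c) (hane : a ≠ 0)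
    (p : ℕ → ℝ) (hp0 : p 0 = a)
    (hprec : ∀ d : ℕ, p (d + 1) = a + b * p d + c * (p d) ^ 2) :
    ∀ d : ℕ, 1 ≤ d → 1 - 1 / (a * d) ≤ p d := by
  have hapos : 0 < a := lt_of_le_of_ne ha (Ne.symm hane)
  have hhalf : a ≤ 1 / 2 := by linarith [hac ▸ hsum]
  -- p stays in [0,1]
  have hbound : ∀ d : ℕ, 0 ≤ p d ∧ p d ≤ 1 := by
    intro d
    induction d with
    | zero => exact ⟨hp0 ▸ ha, by rw [hp0]; linarith⟩
    | succ n ih =>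
      obtain ⟨h0, h1⟩ := ih
      rw [hprec n]
      constructor
      · positivity
      · have hp2 : p n ^ 2 ≤ 1 := by nlinarith
        nlinarith [mul_le_mul_of_nonneg_left h1 hb, mul_le_mul_of_nonneg_left hp2 hc]
  -- recurrence for q = 1 - p
  have hq : ∀ d : ℕ, 1 - p (d + 1) = (1 - p d) * (1 - a * (1 - p d)) := by
    intro d
    rw [hprec d, ← hac]
    have hbe : b = 1 - 2 * a := by linarith [hac ▸ hsum]
    rw [hbe]; ring
  -- main induction: a * d * (1 - p d) ≤ 1
  have main : ∀ d : ℕ, 1 ≤ d → a * d * (1 - p d) ≤ 1 := by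
    intro d hd
    induction d, hd using Nat.le_induction with
    | base =>
      obtain ⟨h0, h1⟩ := hbound 1
      push_cast
      nlinarith
    | succ n hn ih =>
      obtain ⟨h0, h1⟩ := hbound n
      have hq0 : 0 ≤ 1 - p n := by linarith
      set t : ℝ := a * (1 - p n) with htdef
      have ht0 : 0 ≤ t := mul_nonneg ha hq0
      have ht2 : t ≤ 1 / 2 := by
        have : t ≤ a * 1 := by
          apply mul_le_mul_of_nonneg_left _ ha
          linarith
        linarith
      have hD : (1 : ℝ) ≤ (n : ℝ) := by exact_mod_cast hn
      have hdt : (n : ℝ) * t ≤ 1 := by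
        calc (n : ℝ) * t = a * n * (1 - p n) := by ring
        _ ≤ 1 := ih
      have key : ((n : ℝ) + 1) * t * (1 - t) ≤ 1 := by
        nlinarith [mul_nonneg (sub_nonneg.2 hD) (by linarith : (0:ℝ) ≤ 1 - 2*t),
          sq_nonneg ((n : ℝ) * t - 1), mul_nonneg ht0 ht0]
      have := hq n
      push_cast
      calc a * ((n : ℝ) + 1) * (1 - p (n + 1))
          = ((n : ℝ) + 1) * t * (1 - t) := by rw [this]; ring
        _ ≤ 1 := key
  intro d hd
  have h := main d hd
  have hadpos : 0 < a * (d : ℝ) := by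
    have : (0 : ℝ) < (d : ℝ) := by exact_mod_cast hd
    positivity
  have h2 : 1 - p d ≤ 1 / (a * d) := by
    rw [le_div_iff₀ hadpos]; linarith [h]
  linarith
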